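/- Let P1 be a graph pattern whose translation ⟪P1⟫^{G'} correctly represents ⟦P1⟧_{D(G_j)} for each graph identifier j, and let v be a variable not in var(P1). Consider the translated expression ⟪(GRAPH v P1)⟫^G = ⟪()⟫^G ⋈ Π_{{v} ∪ var(P1)}[ ρ_{G'←gid, v←IRI}( σ_{gid > 0}(Graphs) ) ⋈ ⟪P1⟫^{G'} ]. Then for every graph identifier j, the tuples with G = j are in one-to-one, multiplicity-preserving correspondence with the solution mappings of the multiset (⟦P1⟧_{D(G_1)} ⋈ {| v → u_1 |}) ∪ … ∪ (⟦P1⟧_{D(G_n)} ⋈ {| v → u_n |}); hence the translation correctly represents ⟦(GRAPH v P1)⟧_{D(G_j)}, independently of the active graph. -/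

import Mathlib

/-!
Core formalization of SPARQL 1.1 multiset semantics and of the paper's
translation of SPARQL graph patterns into bag-semantics relational algebra
over the base relations `Graphs` and `Quads`.

Tuples of a translated expression `⟪P⟫^G` (whose attributes are the graph
attribute `G` together with the in-scope variables `var(P)`) are encoded as
pairs `(j, μ) : ℕ × SolMap`, where `j` is the value of the graph attribute and
`μ v = some t` means the attribute `v` holds the RDF term `t`, while
`μ v = none` means the attribute `v` holds the distinguished value `unb`.
-/

noncomputable section
open Classical

/-- RDF terms: IRIs, blank nodes and literals. -/
inductive RDFTerm where
  | iri : String → RDFTerm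
  | blank : String → RDFTerm
  | lit : String → RDFTerm
deriving DecidableEq

abbrev Var := String
abbrev Triple := RDFTerm × RDFTerm × RDFTerm
/-- A graph is a set of triples (no duplicates). -/
abbrev RDFGraph := Finset Triple

/-- An RDF dataset: a default graph and named graphs with pairwise distinct IRIs. -/
structure Dataset where
  dflt : RDFGraph
  named : List (String × RDFGraph)
  distinctNames : (named.map Prod.fst).Nodup

instance : Zero (Option RDFTerm) := ⟨none⟩

/-- A solution mapping: a partial function from variables to RDF terms
(finitely supported; `none` = the variable is unbound / attribute value `unb`). -/
abbrev SolMap := Var →₀ Option RDFTerm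

/-- Domain of a solution mapping. -/
def dom (μ : SolMap) : Finset Var := μ.support

/-- Two solution mappings are compatible if they agree on their common domain. -/
def compatible (μ1 μ2 : SolMap) : Prop := ∀ v ∈ dom μ1 ∩ dom μ2, μ1 v = μ2 v

/-- Union (merge) of two solution mappings; pointwise, this is the function
`first` of the paper: take the first value that is not `unb`. -/
def munion (μ1 μ2 : SolMap) : SolMap :=
  Finsupp.zipWith (fun a b => a.orElse (fun _ => b)) rfl μ1 μ2

/-- SPARQL Join of two multisets of solution mappings:
`Ω1 ⋈ Ω2 = {| μ1 ∪ μ2 : μ1 ∈ Ω1, μ2 ∈ Ω2, μ1 and μ2 compatible |}`. -/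
def mJoin (Ω1 Ω2 : Multiset SolMap) : Multiset SolMap :=
  Ω1.bind fun μ1 => (Ω2.filter fun μ2 => compatible μ1 μ2).map fun μ2 => munion μ1 μ2

/-- A component of a triple pattern: an RDF term or a variable. -/
inductive TP where
  | term : RDFTerm → TP
  | var : Var → TP
deriving DecidableEq

mutual
/-- SPARQL graph patterns.  `opt P1 P2 R` is `(P1 OPTIONAL (P2 FILTER R))`;
plain `OPTIONAL` is recovered with `R = FilterExpr.tt`. -/
inductive Pattern where
  | empty : Pattern
  | triple : TP → TP → TP → Pattern
  | and : Pattern → Pattern → Pattern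
  | union : Pattern → Pattern → Pattern
  | minus : Pattern → Pattern → Pattern
  | opt : Pattern → Pattern → FilterExpr → Pattern
  | filter : Pattern → FilterExpr → Pattern
  | graphIRI : String → Pattern → Pattern
  | graphVar : Var → Pattern → Pattern

/-- SPARQL filter expressions; `base` is an abstract boolean condition on the
current solution mapping, `ex`/`nex` are `EXISTS`/`NOT EXISTS` patterns. -/
inductive FilterExpr where
  | tt : FilterExpr
  | base : (SolMap → Prop) → FilterExpr
  | ex : Pattern → FilterExpr
  | nex : Pattern → FilterExpr
  | fand : FilterExpr → FilterExpr → FilterExpr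
  | forr : FilterExpr → FilterExpr → FilterExpr
  | fnot : FilterExpr → FilterExpr
end

def varTP : TP → Finset Var
  | .term _ => ∅
  | .var v => {v}

/-- In-scope variables `var(P)` of a graph pattern. -/
def varP : Pattern → Finset Var
  | .empty => ∅
  | .triple s p o => varTP s ∪ varTP p ∪ varTP o
  | .and P1 P2 => varP P1 ∪ varP P2
  | .union P1 P2 => varP P1 ∪ varP P2
  | .minus P1 _ => varP P1
  | .opt P1 P2 _ => varP P1 ∪ varP P2
  | .filter P1 _ => varP P1
  | .graphIRI _ P1 => varP P1
  | .graphVar v P1 => insert v (varP P1)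

/-- Substitution of a solution mapping in a triple-pattern component. -/
def substTP (μ : SolMap) : TP → TP
  | .term a => .term a
  | .var v =>
      match μ v with
      | some t => .term t
      | none => .var v

/-- Unification of a triple-pattern component with an RDF term, extending a
solution mapping (handles repeated variables). -/
def unify : TP → RDFTerm → SolMap → Option SolMap
  | .term a, b, μ => if a = b then some μ else none
  | .var v, b, μ =>
      match μ v with
      | none => some (Finsupp.update μ v (some b))
      | some c => if c = b then some μ else none

/-- Matching a triple pattern against a triple: returns the unique solution
mapping `μ` with `dom μ = var(t)` and `μ(t) = tr`, if it exists. -/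
def matchT (s p o : TP) (tr : Triple) : Option SolMap :=
  (unify s tr.1 0).bind fun μ1 => (unify p tr.2.1 μ1).bind fun μ2 => unify o tr.2.2 μ2

/-- Number of named graphs of the dataset; graph identifiers are `0, …, nGraphs D`. -/
def nGraphs (D : Dataset) : ℕ := D.named.length

/-- The graph with identifier `j` (`0` is the default graph). -/
def graphAt (D : Dataset) : ℕ → RDFGraph
  | 0 => D.dflt
  | Nat.succ k => ((D.named[k]?).map Prod.snd).getD ∅

/-- The graph identifier of the named graph with IRI `u`, if any. -/
def gidOf (D : Dataset) (u : String) : Option ℕ :=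
  (D.named.findIdx? (fun x => x.1 = u)).map (· + 1)

/-- The named graphs of the dataset, enumerated with their identifiers. -/
def namedEnum (D : Dataset) : List (ℕ × String) :=
  D.named.zipIdx.map fun p => (p.2 + 1, p.1.1)

mutual
/-- SPARQL 1.1 evaluation `⟦pre(P)⟧_{D(G_g)}` of the graph pattern `P`,
pre-instantiated by the substitution `pre` (needed for `EXISTS`),
over the dataset `D` with active graph `G_g`.  The plain evaluation
`⟦P⟧_{D(G_g)}` is `evalPat D 0 g P`. -/
def evalPat (D : Dataset) (pre : SolMap) : ℕ → Pattern → Multiset SolMap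
  | _, .empty => {0}
  | g, .triple s p o =>
      (graphAt D g).val.filterMap fun tr =>
        matchT (substTP pre s) (substTP pre p) (substTP pre o) tr
  | g, .and P1 P2 => mJoin (evalPat D pre g P1) (evalPat D pre g P2)
  | g, .union P1 P2 => evalPat D pre g P1 + evalPat D pre g P2
  | g, .minus P1 P2 =>
      (evalPat D pre g P1).filter fun μ1 =>
        ∀ μ2 ∈ evalPat D pre g P2, ¬ compatible μ1 μ2 ∨ dom μ1 ∩ dom μ2 = ∅
  | g, .opt P1 P2 R =>
      ((mJoin (evalPat D pre g P1) (evalPat D pre g P2)).filter fun μ => satF D pre g R μ)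
      + ((evalPat D pre g P1).filter fun μ1 =>
          ∀ μ2 ∈ evalPat D pre g P2,
            ¬ compatible μ1 μ2 ∨ (compatible μ1 μ2 ∧ ¬ satF D pre g R (munion μ1 μ2)))
  | g, .filter P1 R => (evalPat D pre g P1).filter fun μ => satF D pre g R μ
  | _, .graphIRI u P1 =>
      match gidOf D u with
      | some i => evalPat D pre i P1
      | none => 0
  | g, .graphVar v P1 =>
      match pre v with
      | some (RDFTerm.iri u) =>
          (match gidOf D u with
           | some i => evalPat D pre i P1
           | none => 0)
      | some _ => 0
      | none =>
          (↑(namedEnum D) : Multiset (ℕ × String)).bind fun p =>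
            mJoin (evalPat D pre p.1 P1) {Finsupp.single v (some (RDFTerm.iri p.2))}
termination_by g P => sizeOf P

/-- Satisfaction `μ ⊨_{D(G_g)} R` of a filter expression by a solution mapping,
under the pre-instantiation `pre`; `EXISTS(P)` holds iff `⟦μ(P)⟧_{D(G_g)}`
is a non-empty multiset. -/
def satF (D : Dataset) (pre : SolMap) : ℕ → FilterExpr → SolMap → Prop
  | _, .tt, _ => True
  | _, .base f, μ => f μ
  | g, .ex P, μ => evalPat D (munion pre μ) g P ≠ 0
  | g, .nex P, μ => evalPat D (munion pre μ) g P = 0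
  | g, .fand R1 R2, μ => satF D pre g R1 μ ∧ satF D pre g R2 μ
  | g, .forr R1 R2, μ => satF D pre g R1 μ ∨ satF D pre g R2 μ
  | g, .fnot R1, μ => ¬ satF D pre g R1 μ
termination_by g R μ => sizeOf R
end

/-! ### The base relations `Graphs` and `Quads` and the relational translation -/

/-- The base relation `Graphs(gid, IRI)`: the tuple `(0, <>)` for the default
graph (no IRI) and a tuple `(i, u_i)` for each named graph. -/
def graphsRel (D : Dataset) : Multiset (ℕ × Option String) :=
  ↑((0, (none : Option String)) :: (namedEnum D).map fun p => (p.1, some p.2))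

/-- The base relation `Quads(gid, sub, pred, obj)`. -/
def quadsRel (D : Dataset) : Multiset (ℕ × Triple) :=
  (graphsRel D).bind fun p => (graphAt D p.1).val.map fun tr => (p.1, tr)

/-- `⟪()⟫^G = Π_G[ρ_{G←gid}(Graphs)]`, the translation of the empty graph
pattern (tuples have the single attribute `G`, i.e. second component `0`). -/
def unitRel (D : Dataset) : Multiset (ℕ × SolMap) := (graphsRel D).map fun p => (p.1, 0)

/-- The condition `comp`: for each common variable `v`,
`v' = unb ∨ v'' = unb ∨ v' = v''`. -/
def compCond (common : Finset Var) (μ1 μ2 : SolMap) : Prop :=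
  ∀ v ∈ common, μ1 v = none ∨ μ2 v = none ∨ μ1 v = μ2 v

/-- The condition `disj`: for each common variable `v`, `v = unb ∨ v' = unb`. -/
def disjCond (common : Finset Var) (μ1 μ2 : SolMap) : Prop :=
  ∀ v ∈ common, μ1 v = none ∨ μ2 v = none

/-- The condition `subst`: for each common variable `v`, `v = v' ∨ v = unb`. -/
def substCond (common : Finset Var) (μ μ' : SolMap) : Prop :=
  ∀ v ∈ common, μ v = μ' v ∨ μ v = none

/-- The translation of `AND`: rename the common variables apart, join on the
graph attribute, select with `comp`, and project back using `first`. -/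
def transAnd (common : Finset Var) (R1 R2 : Multiset (ℕ × SolMap)) : Multiset (ℕ × SolMap) :=
  R1.bind fun t1 => R2.bind fun t2 =>
    if t1.1 = t2.1 ∧ compCond common t1.2 t2.2 then {(t1.1, munion t1.2 t2.2)} else 0

/-- Bag-semantics natural join of two relations over identical attribute sets
(tuples join exactly with equal tuples, multiplicities multiply). -/
def bagJoinSame (A B : Multiset (ℕ × SolMap)) : Multiset (ℕ × SolMap) :=
  A.bind fun t => Multiset.replicate (B.count t) t

/-- Projection of a tuple onto a set of variable attributes. -/
def restrict (μ : SolMap) (S : Finset Var) : SolMap :=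
  Finsupp.filter (fun v => v ∈ S) μ

/-- The translation of `MINUS`:
`⟪P1⟫ ⋈ [δ(⟪P1⟫) − Π_{G,var(P1)}(σ_{comp ∧ ¬disj}(⟪P1⟫ ⋈ ρ(⟪P2⟫)))]`. -/
def transMinus (common : Finset Var) (R1 R2 : Multiset (ℕ × SolMap)) : Multiset (ℕ × SolMap) :=
  let inner := R1.bind fun t1 => R2.bind fun t2 =>
    if t1.1 = t2.1 ∧ compCond common t1.2 t2.2 ∧ ¬ disjCond common t1.2 t2.2 then {t1} else 0
  bagJoinSame R1 (R1.dedup - inner)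

/-- The auxiliary expression `E_i` of the translation of `FILTER`, for an
`EXISTS`/`NOT EXISTS` subpattern with translation `Pi'`:
`Π_{G,var(P),ex_i←0}[δ(P') − Π_{G,var(P)}(σ_subst(P' ⋈ ρ(Pi')))]
 ∪ Π_{G,var(P),ex_i←1}[δ(P') − [δ(P') − Π_{G,var(P)}(σ_subst(P' ⋈ ρ(Pi')))]]`. -/
def buildE (VP Vi : Finset Var) (P' Pi' : Multiset (ℕ × SolMap)) :
    Multiset (ℕ × SolMap × ℕ) :=
  let inner := P'.bind fun t => Pi'.bind fun t' =>
    if t.1 = t'.1 ∧ substCond (VP ∩ Vi) t.2 t'.2 then {t} else 0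
  ((P'.dedup - inner).map fun t => (t.1, t.2, 0))
  + ((P'.dedup - (P'.dedup - inner)).map fun t => (t.1, t.2, 1))

/-- Evaluation of the relational condition `filter` obtained from `R`, where
the occurrences of `EXISTS(P_i)` (resp. `NOT EXISTS(P_i)`), in left-to-right
order, are replaced by `ex_i <> 0` (resp. `ex_i = 0`), the values of the
attributes `ex_i` being supplied by the list `bs`. -/
def condEval : FilterExpr → SolMap → List ℕ → Prop × List ℕ
  | .tt, _, bs => (True, bs)
  | .base f, μ, bs => (f μ, bs)
  | .ex _, _, bs => (bs.headD 0 ≠ 0, bs.tail)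
  | .nex _, _, bs => (bs.headD 0 = 0, bs.tail)
  | .fand R1 R2, μ, bs =>
      let r1 := condEval R1 μ bs
      let r2 := condEval R2 μ r1.2
      (r1.1 ∧ r2.1, r2.2)
  | .forr R1 R2, μ, bs =>
      let r1 := condEval R1 μ bs
      let r2 := condEval R2 μ r1.2
      (r1.1 ∨ r2.1, r2.2)
  | .fnot R1, μ, bs =>
      let r1 := condEval R1 μ bs
      (¬ r1.1, r1.2)

/-- Natural join of the running relation with an auxiliary relation `E_i`
(join on the graph attribute and all the variable attributes). -/
def joinE (A : Multiset (ℕ × SolMap × List ℕ)) (E : Multiset (ℕ × SolMap × ℕ)) :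
    Multiset (ℕ × SolMap × List ℕ) :=
  A.bind fun a => E.bind fun e =>
    if a.1 = e.1 ∧ a.2.1 = e.2.1 then {(a.1, a.2.1, a.2.2 ++ [e.2.2])} else 0

/-- The translation of `FILTER`:
`Π_{G,var(P)}[σ_filter(P' ⋈ E_1 ⋈ … ⋈ E_m)]`. -/
def filterApply (P' : Multiset (ℕ × SolMap)) (Es : List (Multiset (ℕ × SolMap × ℕ)))
    (R : FilterExpr) : Multiset (ℕ × SolMap) :=
  ((Es.foldl joinE (P'.map fun t => (t.1, t.2, ([] : List ℕ)))).filter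
      fun x => (condEval R x.2.1 x.2.2).1).map fun x => (x.1, x.2.1)

mutual
/-- The paper's translation `⟪P⟫^G` of a graph pattern into a bag-semantics
relational algebra expression over `Graphs` and `Quads`, evaluated;
tuples are encoded as pairs `(j, μ)` (graph attribute value, values of the
variable attributes with `none` = `unb`). -/
def transP (D : Dataset) : Pattern → Multiset (ℕ × SolMap)
  | .empty => unitRel D
  | .triple s p o =>
      (quadsRel D).filterMap fun q => (matchT s p o q.2).map fun μ => (q.1, μ)
  | .and P1 P2 => transAnd (varP P1 ∩ varP P2) (transP D P1) (transP D P2)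
  | .union P1 P2 => transP D P1 + transP D P2
  | .minus P1 P2 => transMinus (varP P1 ∩ varP P2) (transP D P1) (transP D P2)
  | .opt P1 P2 R =>
      let R1 := transP D P1
      let J := transAnd (varP P1 ∩ varP P2) R1 (transP D P2)
      let F := filterApply J (transEs D (varP P1 ∪ varP P2) J R) R
      J + bagJoinSame R1 (R1.dedup - F.map fun t => (t.1, restrict t.2 (varP P1)))
  | .filter P1 R =>
      let P' := transP D P1
      filterApply P' (transEs D (varP P1) P' R) R
  | .graphIRI u P1 =>
      let inner : Multiset SolMap :=
        (graphsRel D).bind fun p =>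
          if p.2 = some u then (transP D P1).bind (fun t => if t.1 = p.1 then {t.2} else 0)
          else 0
      (graphsRel D).bind fun p => inner.map fun μ => (p.1, μ)
  | .graphVar v P1 =>
      let inner : Multiset SolMap :=
        (graphsRel D).bind fun p =>
          match p.2 with
          | some u =>
              (transP D P1).bind fun t =>
                if t.1 = p.1 then
                  (if v ∈ varP P1 then (if t.2 v = some (RDFTerm.iri u) then {t.2} else 0)
                   else {Finsupp.update t.2 v (some (RDFTerm.iri u))})
                else 0
          | none => 0
      (graphsRel D).bind fun p => inner.map fun μ => (p.1, μ)
termination_by P => sizeOf P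

/-- The list of auxiliary expressions `E_1, …, E_m`, one for each occurrence of
`EXISTS`/`NOT EXISTS` in the filter expression, in left-to-right order. -/
def transEs (D : Dataset) (VP : Finset Var) (P' : Multiset (ℕ × SolMap)) :
    FilterExpr → List (Multiset (ℕ × SolMap × ℕ))
  | .tt => []
  | .base _ => []
  | .ex Pi => [buildE VP (varP Pi) P' (transP D Pi)]
  | .nex Pi => [buildE VP (varP Pi) P' (transP D Pi)]
  | .fand R1 R2 => transEs D VP P' R1 ++ transEs D VP P' R2
  | .forr R1 R2 => transEs D VP P' R1 ++ transEs D VP P' R2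
  | .fnot R1 => transEs D VP P' R1
termination_by R => sizeOf R
end

/-- `⟪P⟫^G` correctly represents `⟦P⟧_{D(G_j)}` for every graph identifier `j`
of the dataset: for each `j` the tuples with graph attribute `j` are in
one-to-one multiplicity-preserving correspondence with the solution mappings
(`unb`, i.e. `none`, encoding that a variable is unbound). -/
def RepOK (D : Dataset) (P : Pattern) : Prop :=
  ∀ j ≤ nGraphs D, ∀ μ : SolMap, (transP D P).count (j, μ) = (evalPat D 0 j P).count μ


lemma dom_munion (μ1 μ2 : SolMap) : dom (munion μ1 μ2) ⊆ dom μ1 ∪ dom μ2 :=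
  Finsupp.support_zipWith

lemma varTP_substTP (pre : SolMap) (c : TP) : varTP (substTP pre c) ⊆ varTP c := by
  cases c with
  | term a => simp [substTP, varTP]
  | var w =>
    simp only [substTP]
    cases pre w <;> simp [varTP]

lemma dom_unify {c : TP} {b : RDFTerm} {μ μ' : SolMap} (h : unify c b μ = some μ') :
    dom μ' ⊆ varTP c ∪ dom μ := by
  cases c with
  | term a =>
    simp only [unify] at h
    split at h
    · cases h; simp
    · exact absurd h (by simp)
  | var w =>
    have h' : (match μ w with
        | none => some (Finsupp.update μ w (some b))
        | some c => if c = b then some μ else none) = some μ' := h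
    cases hw : μ w with
    | none =>
      rw [hw] at h'
      cases h'
      intro x hx
      rw [dom, Finsupp.support_update_ne_zero _ _ (by simp : (some b : Option RDFTerm) ≠ 0)] at hx
      simp only [Finset.mem_insert] at hx
      rcases hx with rfl | hx
      · simp [varTP]
      · exact Finset.mem_union_right _ hx
    | some c =>
      rw [hw] at h'
      have h'' : (if c = b then some μ else none) = some μ' := h'
      split at h''
      · cases h''; exact fun x hx => Finset.mem_union_right _ hx
      · exact absurd h'' (by simp)

lemma dom_matchT {s p o : TP} {tr : Triple} {μ : SolMap} (h : matchT s p o tr = some μ) :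
    dom μ ⊆ varTP s ∪ varTP p ∪ varTP o := by
  simp only [matchT, Option.bind_eq_some_iff] at h
  obtain ⟨μ1, h1, μ2, h2, h3⟩ := h
  have d0 : dom (0 : SolMap) = ∅ := Finsupp.support_zero
  have e1 := dom_unify h1
  have e2 := dom_unify h2
  have e3 := dom_unify h3
  rw [d0] at e1
  intro x hx
  rcases Finset.mem_union.mp (e3 hx) with h | h
  · exact Finset.mem_union_right _ h
  · rcases Finset.mem_union.mp (e2 h) with h' | h'
    · exact Finset.mem_union_left _ (Finset.mem_union_right _ h')
    · rcases Finset.mem_union.mp (e1 h') with h'' | h''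
      · exact Finset.mem_union_left _ (Finset.mem_union_left _ h'')
      · exact absurd h'' (Finset.notMem_empty x)

lemma mem_mJoin {Ω1 Ω2 : Multiset SolMap} {μ : SolMap} (h : μ ∈ mJoin Ω1 Ω2) :
    ∃ μ1 ∈ Ω1, ∃ μ2 ∈ Ω2, μ = munion μ1 μ2 := by
  simp only [mJoin, Multiset.mem_bind, Multiset.mem_map, Multiset.mem_filter] at h
  obtain ⟨μ1, h1, μ2, ⟨h2, _⟩, h3⟩ := h
  exact ⟨μ1, h1, μ2, h2, h3.symm⟩

lemma dom_evalPat (D : Dataset) :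
    ∀ (P : Pattern) (pre : SolMap) (g : ℕ) (μ : SolMap),
      μ ∈ evalPat D pre g P → dom μ ⊆ varP P := by
  have key : ∀ (n : ℕ) (P : Pattern), sizeOf P ≤ n → ∀ (pre : SolMap) (g : ℕ) (μ : SolMap),
      μ ∈ evalPat D pre g P → dom μ ⊆ varP P := by
    intro n
    induction n with
    | zero => intro P hP; cases P <;> simp +arith +decide at hP
    | succ n ih =>
      intro P hP pre g μ hμ
      cases P with
      | empty =>
        rw [evalPat] at hμ
        simp only [Multiset.mem_singleton] at hμ
        subst hμ
        simp [dom, varP]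
      | triple s p o =>
        rw [evalPat] at hμ
        simp only [Multiset.mem_filterMap] at hμ
        obtain ⟨tr, _, htr⟩ := hμ
        have := dom_matchT htr
        intro x hx
        have := this hx
        simp only [varP, Finset.mem_union] at *
        rcases this with (h | h) | h
        · exact Or.inl (Or.inl (varTP_substTP pre s h))
        · exact Or.inl (Or.inr (varTP_substTP pre p h))
        · exact Or.inr (varTP_substTP pre o h)
      | and P1 P2 =>
        rw [evalPat] at hμ
        obtain ⟨μ1, h1, μ2, h2, rfl⟩ := mem_mJoin hμ
        have s1 := ih P1 (by simp +arith +decide at hP ⊢; omega) pre g μ1 h1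
        have s2 := ih P2 (by simp +arith +decide at hP ⊢; omega) pre g μ2 h2
        refine (dom_munion μ1 μ2).trans ?_
        simp only [varP]
        exact Finset.union_subset_union s1 s2
      | union P1 P2 =>
        rw [evalPat] at hμ
        simp only [Multiset.mem_add] at hμ
        simp only [varP]
        rcases hμ with h | h
        · exact (ih P1 (by simp +arith +decide at hP ⊢; omega) pre g μ h).trans Finset.subset_union_left
        · exact (ih P2 (by simp +arith +decide at hP ⊢; omega) pre g μ h).trans Finset.subset_union_right
      | minus P1 P2 =>
        rw [evalPat] at hμ
        simp only [Multiset.mem_filter] at hμ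
        exact ih P1 (by simp +arith +decide at hP ⊢; omega) pre g μ hμ.1
      | opt P1 P2 R =>
        rw [evalPat] at hμ
        simp only [Multiset.mem_add, Multiset.mem_filter] at hμ
        simp only [varP]
        rcases hμ with ⟨h, _⟩ | ⟨h, _⟩
        · obtain ⟨μ1, h1, μ2, h2, rfl⟩ := mem_mJoin h
          have s1 := ih P1 (by simp +arith +decide at hP ⊢; omega) pre g μ1 h1
          have s2 := ih P2 (by simp +arith +decide at hP ⊢; omega) pre g μ2 h2
          exact (dom_munion μ1 μ2).trans (Finset.union_subset_union s1 s2)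
        · exact (ih P1 (by simp +arith +decide at hP ⊢; omega) pre g μ h).trans Finset.subset_union_left
      | filter P1 R =>
        rw [evalPat] at hμ
        simp only [Multiset.mem_filter] at hμ
        exact ih P1 (by simp +arith +decide at hP ⊢; omega) pre g μ hμ.1
      | graphIRI u P1 =>
        rw [evalPat] at hμ
        cases h : gidOf D u with
        | none => rw [h] at hμ; simp at hμ
        | some i =>
          rw [h] at hμ
          exact ih P1 (by simp +arith +decide at hP ⊢; omega) pre i μ hμ
      | graphVar w P1 =>
        rw [evalPat] at hμ
        have hsub : varP P1 ⊆ varP (.graphVar w P1) := by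
          simp only [varP]; exact Finset.subset_insert _ _
        cases hw : pre w with
        | some t =>
          rw [hw] at hμ
          cases t with
          | iri u =>
            have hμ' : μ ∈ (match gidOf D u with
                | some i => evalPat D pre i P1
                | none => (0 : Multiset SolMap)) := hμ
            cases h : gidOf D u with
            | none => rw [h] at hμ'; simp at hμ'
            | some i =>
              rw [h] at hμ'
              exact (ih P1 (by simp +arith +decide at hP ⊢; omega) pre i μ hμ').trans hsub
          | blank b => simp at hμ
          | lit l => simp at hμ
        | none =>
          rw [hw] at hμ
          simp only [Multiset.mem_bind] at hμ
          obtain ⟨q, _, hq⟩ := hμ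
          obtain ⟨μ1, h1, μ2, h2, rfl⟩ := mem_mJoin hq
          have s1 := ih P1 (by simp +arith +decide at hP ⊢; omega) pre q.1 μ1 h1
          simp only [Multiset.mem_singleton] at h2
          subst h2
          refine (dom_munion _ _).trans ?_
          intro x hx
          simp only [Finset.mem_union] at hx
          simp only [varP, Finset.mem_insert]
          rcases hx with h | h
          · exact Or.inr (s1 h)
          · left
            have : dom (Finsupp.single w (some (RDFTerm.iri q.2))) = {w} :=
              Finsupp.support_single_ne_zero _ (by simp : (some _ : Option RDFTerm) ≠ 0)
            rw [this] at h
            simpa using h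
  exact fun P => key (sizeOf P) P le_rfl

/-- Let `P1` have a correct translation for each graph
identifier and let `v` be a variable not in `var(P1)`.  In
`⟪(GRAPH v P1)⟫^G = ⟪()⟫^G ⋈ Π_{{v}∪var(P1)}[ρ_{G'←gid, v←IRI}(σ_{gid>0}(Graphs)) ⋈ ⟪P1⟫^{G'}]`,
for every graph identifier `j` the tuples with `G = j` are in one-to-one,
multiplicity-preserving correspondence with the solution mappings of
`(⟦P1⟧_{D(G_1)} ⋈ {| v → u_1 |}) ∪ … ∪ (⟦P1⟧_{D(G_n)} ⋈ {| v → u_n |})`;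
hence the translation correctly represents `⟦(GRAPH v P1)⟧_{D(G_j)}`,
independently of the active graph. -/
theorem graphVar_correct (D : Dataset) (v : Var) (P1 : Pattern)
    (hv : v ∉ varP P1) (h1 : RepOK D P1) :
    ∀ j ≤ nGraphs D, ∀ μ : SolMap,
      (transP D (.graphVar v P1)).count (j, μ)
          = ((↑(namedEnum D) : Multiset (ℕ × String)).bind fun p =>
              mJoin (evalPat D 0 p.1 P1)
                {Finsupp.single v (some (RDFTerm.iri p.2))}).count μ
      ∧ (transP D (.graphVar v P1)).count (j, μ)
          = (evalPat D 0 j (.graphVar v P1)).count μ := by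
  intro j hj μ
  -- the slice of the translation of `P1` at graph id `i` is `⟦P1⟧_{D(G_i)}`
  have hslice : ∀ i ≤ nGraphs D,
      ((transP D P1).bind fun t => if t.1 = i then ({t.2} : Multiset SolMap) else 0)
        = evalPat D 0 i P1 := by
    intro i hi
    ext μ1
    rw [← h1 i hi μ1]
    induction (transP D P1) using Multiset.induction_on with
    | empty => simp
    | cons a s ih =>
      rw [Multiset.cons_bind, Multiset.count_add, ih, Multiset.count_cons]
      obtain ⟨a1, a2⟩ := a
      by_cases h : a1 = i
      · subst h
        by_cases h2 : μ1 = a2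
        · subst h2
          rw [if_pos rfl, Multiset.count_singleton, if_pos rfl, if_pos rfl]
          omega
        · have hne : ¬ (((a1, μ1) : ℕ × SolMap) = (a1, a2)) := by
            intro h'; exact h2 (congrArg Prod.snd h')
          rw [if_pos rfl, Multiset.count_singleton, if_neg h2, if_neg hne]
          omega
      · have hne : ¬ (((i, μ1) : ℕ × SolMap) = (a1, a2)) := by
          intro h'; exact h (congrArg Prod.fst h').symm
        rw [if_neg h, Multiset.count_zero, if_neg hne]
        omega
  -- each named-graph piece of the translation equals the corresponding SPARQL join
  have piece : ∀ i ≤ nGraphs D, ∀ u : String,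
      ((transP D P1).bind fun t =>
          if t.1 = i then ({Finsupp.update t.2 v (some (RDFTerm.iri u))} : Multiset SolMap)
          else 0)
        = mJoin (evalPat D 0 i P1) {Finsupp.single v (some (RDFTerm.iri u))} := by
    intro i hi u
    set tm : Option RDFTerm := some (RDFTerm.iri u) with htm
    have hmap :
        ((transP D P1).bind fun t =>
            if t.1 = i then ({Finsupp.update t.2 v tm} : Multiset SolMap) else 0)
          = ((transP D P1).bind fun t =>
              if t.1 = i then ({t.2} : Multiset SolMap) else 0).map
              fun μ1 => Finsupp.update μ1 v tm := by
      rw [Multiset.map_bind]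
      apply Multiset.bind_congr
      intro t _
      split <;> simp
    rw [hmap, hslice i hi, mJoin, ← Multiset.bind_singleton _ (fun μ1 => Finsupp.update μ1 v tm)]
    apply Multiset.bind_congr
    intro μ1 h1m
    have hd : μ1 v = none := by
      by_contra h
      exact hv (dom_evalPat D P1 0 i μ1 h1m (Finsupp.mem_support_iff.mpr h))
    have hcomp : compatible μ1 (Finsupp.single v tm) := by
      intro w hw
      rw [Finset.mem_inter] at hw
      have hwv : w = v := by
        have h2 := hw.2
        rw [dom, Finsupp.support_single_ne_zero _ (by simp [htm] : tm ≠ 0)] at h2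
        simpa using h2
      subst hwv
      exact absurd hd (Finsupp.mem_support_iff.mp hw.1)
    rw [Multiset.filter_singleton, if_pos hcomp, Multiset.map_singleton]
    congr 1
    ext1 w
    show (Finsupp.update μ1 v tm) w = (μ1 w).orElse fun _ => (Finsupp.single v tm) w
    by_cases hwv : w = v
    · subst hwv
      rw [hd, Finsupp.coe_update, Function.update_apply, if_pos rfl,
        Finsupp.single_eq_same]
      rfl
    · rw [Finsupp.single_eq_of_ne hwv, Finsupp.coe_update,
        Function.update_apply, if_neg hwv]
      cases μ1 w <;> rfl
  -- the inner relation of the translation, simplified using `v ∉ var(P1)`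
  have hinner :
      ((graphsRel D).bind fun p =>
        match p.2 with
        | some u =>
            (transP D P1).bind fun t =>
              if t.1 = p.1 then
                (if v ∈ varP P1 then (if t.2 v = some (RDFTerm.iri u) then {t.2} else 0)
                 else {Finsupp.update t.2 v (some (RDFTerm.iri u))})
              else 0
        | none => (0 : Multiset SolMap))
      = (↑(namedEnum D) : Multiset (ℕ × String)).bind fun p =>
          mJoin (evalPat D 0 p.1 P1) {Finsupp.single v (some (RDFTerm.iri p.2))} := by
    rw [graphsRel]
    rw [show ((↑((((0 : ℕ), (none : Option String))) :: (namedEnum D).map fun p => (p.1, some p.2)) :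
        Multiset (ℕ × Option String)))
      = ((0, none) ::ₘ ↑((namedEnum D).map fun p => (p.1, some p.2))) from rfl]
    rw [Multiset.cons_bind]
    rw [show ((↑((namedEnum D).map fun p => (p.1, some p.2)) : Multiset (ℕ × Option String)))
      = (↑(namedEnum D) : Multiset (ℕ × String)).map (fun p => (p.1, some p.2)) from rfl]
    rw [Multiset.bind_map]
    show (0 : Multiset SolMap) + _ = _
    rw [zero_add]
    apply Multiset.bind_congr
    intro p hp
    have hple : p.1 ≤ nGraphs D := by
      simp only [namedEnum, Multiset.mem_coe, List.mem_map] at hp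
      obtain ⟨q, hq, rfl⟩ := hp
      have : q.2 < D.named.length + 0 := List.snd_lt_of_mem_zipIdx hq
      simpa [nGraphs] using this
    show ((transP D P1).bind fun t =>
        if t.1 = p.1 then
          (if v ∈ varP P1 then (if t.2 v = some (RDFTerm.iri p.2) then {t.2} else 0)
           else {Finsupp.update t.2 v (some (RDFTerm.iri p.2))})
        else 0) = _
    rw [← piece p.1 hple p.2]
    apply Multiset.bind_congr
    intro t _
    rw [if_neg hv]
  -- the shape of the translation of `GRAPH v P1`
  have htrans : transP D (.graphVar v P1)
      = (graphsRel D).bind fun p =>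
          (((↑(namedEnum D) : Multiset (ℕ × String)).bind fun q =>
            mJoin (evalPat D 0 q.1 P1) {Finsupp.single v (some (RDFTerm.iri q.2))}).map
            fun μ' => (p.1, μ')) := by
    rw [transP, ← hinner]
  -- counting the tuples `(j, μ)`
  have hcount : ∀ m : Multiset SolMap,
      (((graphsRel D).bind fun p => m.map fun μ' => ((p.1, μ') : ℕ × SolMap))).count (j, μ)
        = m.count μ := by
    intro m
    rw [Multiset.count_bind]
    have hpt : ∀ p : ℕ × Option String,
        ((m.map fun μ' => ((p.1, μ') : ℕ × SolMap)).count (j, μ))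
          = if p.1 = j then m.count μ else 0 := by
      intro p
      by_cases h : p.1 = j
      · rw [h, if_pos rfl]
        exact Multiset.count_map_eq_count' (fun μ' => ((j, μ') : ℕ × SolMap)) m
          (fun a b hab => by injection hab) μ
      · rw [if_neg h, Multiset.count_eq_zero]
        simp only [Multiset.mem_map, not_exists, not_and]
        intro x _ hx
        exact h (congrArg Prod.fst hx)
    rw [Multiset.map_congr rfl fun p _ => hpt p]
    have hlist : ((((0 : ℕ), (none : Option String)) ::
          ((namedEnum D).map fun p => (p.1, some p.2))).map Prod.fst)
        = List.range (nGraphs D + 1) := by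
      rw [List.range_succ_eq_map]
      simp only [List.map_cons, List.map_map, namedEnum, nGraphs]
      congr 1
      rw [List.range_eq_range', ← List.zipIdx_map_snd 0 D.named, List.map_map]
      rfl
    have hfst : Multiset.map (fun p => if p.1 = j then m.count μ else 0) (graphsRel D)
        = (Multiset.range (nGraphs D + 1)).map fun i => if i = j then m.count μ else 0 := by
      have h2 : Multiset.map Prod.fst (graphsRel D) = Multiset.range (nGraphs D + 1) := by
        show (↑(((((0 : ℕ), (none : Option String))) ::
            ((namedEnum D).map fun p => (p.1, some p.2))).map Prod.fst) : Multiset ℕ)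
          = ↑(List.range (nGraphs D + 1))
        exact congrArg _ hlist
      rw [← h2, Multiset.map_map]
      rfl
    rw [hfst]
    rw [show ((Multiset.range (nGraphs D + 1)).map fun i => if i = j then m.count μ else 0).sum
        = ∑ i ∈ Finset.range (nGraphs D + 1), (if i = j then m.count μ else 0) from rfl]
    rw [Finset.sum_ite_eq' (Finset.range (nGraphs D + 1)) j fun _ => m.count μ]
    rw [if_pos (Finset.mem_range.mpr (Nat.lt_succ_of_le hj))]
  have hfirst := hcount ((↑(namedEnum D) : Multiset (ℕ × String)).bind fun q =>
    mJoin (evalPat D 0 q.1 P1) {Finsupp.single v (some (RDFTerm.iri q.2))})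
  rw [← htrans] at hfirst
  refine ⟨hfirst, ?_⟩
  rw [hfirst]
  have heval : evalPat D 0 j (.graphVar v P1)
      = (↑(namedEnum D) : Multiset (ℕ × String)).bind fun p =>
          mJoin (evalPat D 0 p.1 P1) {Finsupp.single v (some (RDFTerm.iri p.2))} := by
    rw [evalPat]
    rfl
  rw [heval]


end
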